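/- arXiv:1803.09357 — 5 statements merged into one kernel-verified Lean document; each statement's English description precedes it below -/
import Mathlib

section
/- Let d ≥ 1, σ > 0, ρ > 0. Let F : ℝ^d → ℝ be bounded, twice continuously differentiable, and ρ-Hessian Lipschitz. Then for every x ∈ ℝ^d, the gradient of the Gaussian smoothing satisfies ‖∇F̃_σ(x) − ∇F(x)‖ ≤ ρ d σ². -/
open MeasureTheory ProbabilityTheory

section AuxGaussian

open Real Filter Set
open scoped ENNReal NNReal Topology

private lemma aux_tendsto_mul_exp_neg_mul_sq_atTop {b : ℝ} (hb : 0 < b) :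
    Tendsto (fun x : ℝ => x * rexp (-b * x ^ 2)) atTop (𝓝 0) := by
  have h := rpow_mul_exp_neg_mul_sq_isLittleO_exp_neg hb (1 : ℝ)
  simp only [Real.rpow_one] at h
  have hexp : Tendsto (fun x : ℝ => rexp (-(1/2) * x)) atTop (𝓝 0) := by
    have hlin : Tendsto (fun x : ℝ => (1/2 : ℝ) * x) atTop atTop :=
      Tendsto.const_mul_atTop (by norm_num) tendsto_id
    exact Filter.Tendsto.congr (fun x => congrArg rexp (neg_mul (1/2) x).symm)
      (tendsto_exp_neg_atTop_nhds_zero.comp hlin)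
  exact h.trans_tendsto hexp

private lemma aux_tendsto_mul_exp_neg_mul_sq_atBot {b : ℝ} (hb : 0 < b) :
    Tendsto (fun x : ℝ => x * rexp (-b * x ^ 2)) atBot (𝓝 0) := by
  have h := (aux_tendsto_mul_exp_neg_mul_sq_atTop hb).comp tendsto_neg_atBot_atTop
  have : (fun x : ℝ => x * rexp (-b * x ^ 2)) =
      fun x : ℝ => -((fun y : ℝ => y * rexp (-b * y ^ 2)) (-x)) := by
    funext x; simp [neg_sq]
  rw [this]
  simpa using h.neg

private lemma aux_integrable_sq_exp_neg_mul_sq {b : ℝ} (hb : 0 < b) :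
    Integrable (fun x : ℝ => x ^ 2 * rexp (-b * x ^ 2)) := by
  have h := integrable_rpow_mul_exp_neg_mul_sq hb (s := 2) (by norm_num)
  simpa [Real.rpow_natCast] using
    (by exact_mod_cast h : Integrable (fun x : ℝ => x ^ ((2:ℕ):ℝ) * rexp (-b * x ^ 2)))

private lemma aux_integral_sq_exp_neg_mul_sq {b : ℝ} (hb : 0 < b) :
    ∫ x : ℝ, x ^ 2 * rexp (-b * x ^ 2) = (2 * b)⁻¹ * ∫ x : ℝ, rexp (-b * x ^ 2) := by
  set g : ℝ → ℝ := fun x => x * rexp (-b * x ^ 2) with hg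
  set g' : ℝ → ℝ := fun x => rexp (-b * x ^ 2) - 2 * b * (x ^ 2 * rexp (-b * x ^ 2)) with hg'
  have hderiv : ∀ x : ℝ, HasDerivAt g (g' x) x := by
    intro x
    have h1 : HasDerivAt (fun x : ℝ => -b * x ^ 2) (-b * (2 * x)) x := by
      simpa using ((hasDerivAt_pow 2 x).const_mul (-b))
    have h2 : HasDerivAt (fun x : ℝ => rexp (-b * x ^ 2)) (rexp (-b * x ^ 2) * (-b * (2 * x))) x :=
      h1.exp
    have := (hasDerivAt_id x).mul h2
    exact this.congr_deriv (by simp only [hg', id]; ring)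
  have hint : Integrable g' := by
    exact (integrable_exp_neg_mul_sq hb).sub ((aux_integrable_sq_exp_neg_mul_sq hb).const_mul _)
  have hTop : Tendsto g atTop (𝓝 0) := aux_tendsto_mul_exp_neg_mul_sq_atTop hb
  have hBot : Tendsto g atBot (𝓝 0) := aux_tendsto_mul_exp_neg_mul_sq_atBot hb
  have h1 : ∫ x in Ioi (0:ℝ), g' x = 0 - g 0 :=
    integral_Ioi_of_hasDerivAt_of_tendsto' (fun x _ => hderiv x) hint.integrableOn hTop
  have h2 : ∫ x in Iic (0:ℝ), g' x = g 0 - 0 :=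
    integral_Iic_of_hasDerivAt_of_tendsto' (fun x _ => hderiv x) hint.integrableOn hBot
  have h3 : ∫ x : ℝ, g' x = 0 := by
    rw [← intervalIntegral.integral_Iic_add_Ioi hint.integrableOn hint.integrableOn, h1, h2]; ring
  rw [hg', ] at h3
  rw [integral_sub (integrable_exp_neg_mul_sq hb)
      ((aux_integrable_sq_exp_neg_mul_sq hb).const_mul _),
    MeasureTheory.integral_const_mul] at h3
  have hb' : (2 : ℝ) * b ≠ 0 := by positivity
  rw [inv_mul_eq_div, eq_div_iff hb']
  linarith [h3]

variable {v : ℝ≥0}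

private lemma aux_coe_v_pos (hv : v ≠ 0) : (0:ℝ) < v := by
  exact_mod_cast (zero_le : (0:ℝ≥0) ≤ v).lt_of_ne (Ne.symm hv)

private lemma aux_b_pos (hv : v ≠ 0) : (0:ℝ) < (2*(v:ℝ))⁻¹ := by
  have := aux_coe_v_pos hv; positivity

private lemma gaussianPDFReal_zero_eq (x : ℝ) :
    gaussianPDFReal 0 v x = (√(2*π*v))⁻¹ * rexp (-(2*(v:ℝ))⁻¹ * x^2) := by
  unfold gaussianPDFReal
  rw [sub_zero, neg_div, div_eq_inv_mul, neg_mul]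

private lemma gaussianReal_density_int (hv : v ≠ 0) (f : ℝ → ℝ) :
    ∫ x, f x ∂(gaussianReal 0 v) = ∫ x, gaussianPDFReal 0 v x * f x := by
  rw [gaussianReal_of_var_ne_zero 0 hv]
  have hm : Measurable fun x => (gaussianPDFReal 0 v x).toNNReal :=
    (measurable_gaussianPDFReal 0 v).real_toNNReal
  rw [show gaussianPDF 0 v = fun x => ((gaussianPDFReal 0 v x).toNNReal : ℝ≥0∞) from rfl]
  rw [integral_withDensity_eq_integral_smul hm f]
  congr 1; funext x
  simp [NNReal.smul_def, Real.coe_toNNReal _ (gaussianPDFReal_nonneg 0 v x)]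

private lemma gaussianReal_density_integrable (hv : v ≠ 0) {f : ℝ → ℝ}
    (h : Integrable (fun x => gaussianPDFReal 0 v x * f x) volume) :
    Integrable f (gaussianReal 0 v) := by
  rw [gaussianReal_of_var_ne_zero 0 hv]
  have hm : Measurable fun x => (gaussianPDFReal 0 v x).toNNReal :=
    (measurable_gaussianPDFReal 0 v).real_toNNReal
  rw [show gaussianPDF 0 v = fun x => ((gaussianPDFReal 0 v x).toNNReal : ℝ≥0∞) from rfl]
  rw [integrable_withDensity_iff_integrable_smul hm]
  apply h.congr
  filter_upwards with x
  simp [NNReal.smul_def, Real.coe_toNNReal _ (gaussianPDFReal_nonneg 0 v x)]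

private lemma integrable_id_gaussianReal (hv : v ≠ 0) :
    Integrable (fun x : ℝ => x) (gaussianReal 0 v) := by
  apply gaussianReal_density_integrable hv
  have : (fun x : ℝ => gaussianPDFReal 0 v x * x)
      = fun x => (√(2*π*v))⁻¹ * (x * rexp (-(2*(v:ℝ))⁻¹ * x^2)) := by
    funext x; rw [gaussianPDFReal_zero_eq]; ring
  rw [this]
  exact (integrable_mul_exp_neg_mul_sq (aux_b_pos hv)).const_mul _

private lemma integrable_sq_gaussianReal (hv : v ≠ 0) :
    Integrable (fun x : ℝ => x ^ 2) (gaussianReal 0 v) := by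
  apply gaussianReal_density_integrable hv
  have : (fun x : ℝ => gaussianPDFReal 0 v x * x ^ 2)
      = fun x => (√(2*π*v))⁻¹ * (x ^ 2 * rexp (-(2*(v:ℝ))⁻¹ * x^2)) := by
    funext x; rw [gaussianPDFReal_zero_eq]; ring
  rw [this]
  exact (aux_integrable_sq_exp_neg_mul_sq (aux_b_pos hv)).const_mul _

private lemma integral_id_gaussianReal' (hv : v ≠ 0) :
    ∫ x, x ∂(gaussianReal 0 v) = 0 := by
  have hmap := gaussianReal_map_const_mul (μ := 0) (v := v) (-1)
  norm_num at hmap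
  have hmeas : AEMeasurable (fun x : ℝ => -x) (gaussianReal 0 v) :=
    measurable_neg.aemeasurable
  have h2 : ∫ x, x ∂(gaussianReal 0 v) = ∫ x, -x ∂(gaussianReal 0 v) := by
    conv_lhs => rw [← hmap]
    rw [integral_map hmeas]
    exact aestronglyMeasurable_id
  rw [integral_neg] at h2
  linarith [h2]

private lemma integral_sq_gaussianReal (hv : v ≠ 0) :
    ∫ x, x ^ 2 ∂(gaussianReal 0 v) = (v:ℝ) := by
  set c : ℝ := (√(2*π*v))⁻¹ with hc
  set b : ℝ := (2*(v:ℝ))⁻¹ with hb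
  have hbpos : 0 < b := aux_b_pos hv
  have h1 : ∫ x, x ^ 2 ∂(gaussianReal 0 v) = c * ∫ x : ℝ, x ^ 2 * rexp (-b * x^2) := by
    rw [gaussianReal_density_int hv]
    rw [← MeasureTheory.integral_const_mul]
    congr 1; funext x; rw [gaussianPDFReal_zero_eq]; ring
  have hone : c * ∫ x : ℝ, rexp (-b * x^2) = 1 := by
    have := integral_gaussianPDFReal_eq_one 0 hv
    rw [show (fun x => gaussianPDFReal 0 v x) = fun x => c * rexp (-b * x^2) from
      funext fun x => gaussianPDFReal_zero_eq x] at this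
    rwa [MeasureTheory.integral_const_mul] at this
  rw [h1, aux_integral_sq_exp_neg_mul_sq hbpos, ← mul_assoc, mul_comm c, mul_assoc, hone, mul_one]
  rw [hb]
  have hvpos := aux_coe_v_pos hv
  field_simp

/-- Marginals of a product of probability measures. -/
private lemma aux_pi_map_eval {d : ℕ} (ms : Fin d → Measure ℝ)
    [∀ i, IsProbabilityMeasure (ms i)] (i : Fin d) :
    (Measure.pi ms).map (Function.eval i) = ms i := by
  ext s hs
  rw [Measure.map_apply (measurable_pi_apply i) hs, Set.eval_preimage, Measure.pi_pi]
  rw [Finset.prod_eq_single i (fun j _ hj => by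
    rw [Function.update_of_ne hj]; exact measure_univ) (by simp)]
  rw [Function.update_self]

end AuxGaussian

/-- The centered Gaussian measure `N(0, σ²I)` on `ℝ^d`, built as the product of
one-dimensional centered Gaussians of variance `σ²`. -/
noncomputable def stdGaussian (d : ℕ) (σ : ℝ) :
    Measure (EuclideanSpace ℝ (Fin d)) :=
  (Measure.pi fun _ : Fin d => gaussianReal 0 (Real.toNNReal (σ ^ 2))).map
    (MeasurableEquiv.toLp 2 (Fin d → ℝ))

/-- Gaussian smoothing `f̃_σ(x) = E_{z ~ N(0,σ²I)}[f(x+z)]`. -/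
noncomputable def gaussSmooth {d : ℕ} (σ : ℝ) (f : EuclideanSpace ℝ (Fin d) → ℝ)
    (x : EuclideanSpace ℝ (Fin d)) : ℝ :=
  ∫ z, f (x + z) ∂(stdGaussian d σ)

section StdGaussianFacts

variable {d : ℕ} {σ : ℝ}

private lemma aux_v_ne_zero (hσ : 0 < σ) : Real.toNNReal (σ ^ 2) ≠ 0 := by
  simp only [ne_eq, Real.toNNReal_eq_zero, not_le]
  positivity

instance aux_stdGaussian_isProbability (d : ℕ) (σ : ℝ) :
    IsProbabilityMeasure (stdGaussian d σ) := by
  unfold _root_.stdGaussian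
  exact Measure.isProbabilityMeasure_map
    (MeasurableEquiv.toLp 2 (Fin d → ℝ)).measurable.aemeasurable

private lemma aux_eval_integrable_sq (hσ : 0 < σ) (i : Fin d) :
    Integrable (fun y : Fin d → ℝ => y i ^ 2)
      (Measure.pi fun _ : Fin d => gaussianReal 0 (Real.toNNReal (σ ^ 2))) := by
  set P := Measure.pi fun _ : Fin d => gaussianReal 0 (Real.toNNReal (σ ^ 2)) with hP
  have hmap : P.map (Function.eval i) = gaussianReal 0 (Real.toNNReal (σ ^ 2)) :=
    aux_pi_map_eval _ i
  have h := integrable_sq_gaussianReal (aux_v_ne_zero hσ)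
  rw [← hmap] at h
  exact (integrable_map_measure h.aestronglyMeasurable
    (measurable_pi_apply i).aemeasurable).mp h

private lemma aux_eval_integral_sq (hσ : 0 < σ) (i : Fin d) :
    ∫ y : Fin d → ℝ, y i ^ 2
      ∂(Measure.pi fun _ : Fin d => gaussianReal 0 (Real.toNNReal (σ ^ 2))) = σ ^ 2 := by
  set P := Measure.pi fun _ : Fin d => gaussianReal 0 (Real.toNNReal (σ ^ 2)) with hP
  have hmap : P.map (Function.eval i) = gaussianReal 0 (Real.toNNReal (σ ^ 2)) :=
    aux_pi_map_eval _ i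
  have h1 : ∫ y : Fin d → ℝ, y i ^ 2 ∂P = ∫ t, t ^ 2 ∂(P.map (Function.eval i)) := by
    refine (integral_map (μ := P) (φ := Function.eval i) (f := fun t : ℝ => t ^ 2)
      (measurable_pi_apply i).aemeasurable ?_).symm
    exact (continuous_pow 2).aestronglyMeasurable
  rw [h1, hmap, integral_sq_gaussianReal (aux_v_ne_zero hσ),
    Real.coe_toNNReal _ (sq_nonneg σ)]

private lemma aux_eval_integrable_id (hσ : 0 < σ) (i : Fin d) :
    Integrable (fun y : Fin d → ℝ => y i)
      (Measure.pi fun _ : Fin d => gaussianReal 0 (Real.toNNReal (σ ^ 2))) := by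
  set P := Measure.pi fun _ : Fin d => gaussianReal 0 (Real.toNNReal (σ ^ 2)) with hP
  have hmap : P.map (Function.eval i) = gaussianReal 0 (Real.toNNReal (σ ^ 2)) :=
    aux_pi_map_eval _ i
  have h := integrable_id_gaussianReal (aux_v_ne_zero hσ)
  rw [← hmap] at h
  exact (integrable_map_measure h.aestronglyMeasurable
    (measurable_pi_apply i).aemeasurable).mp h

private lemma aux_eval_integral_id (hσ : 0 < σ) (i : Fin d) :
    ∫ y : Fin d → ℝ, y i
      ∂(Measure.pi fun _ : Fin d => gaussianReal 0 (Real.toNNReal (σ ^ 2))) = 0 := by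
  set P := Measure.pi fun _ : Fin d => gaussianReal 0 (Real.toNNReal (σ ^ 2)) with hP
  have hmap : P.map (Function.eval i) = gaussianReal 0 (Real.toNNReal (σ ^ 2)) :=
    aux_pi_map_eval _ i
  have h1 : ∫ y : Fin d → ℝ, y i ∂P = ∫ t, t ∂(P.map (Function.eval i)) := by
    refine (integral_map (μ := P) (φ := Function.eval i) (f := fun t : ℝ => t)
      (measurable_pi_apply i).aemeasurable ?_).symm
    exact continuous_id.aestronglyMeasurable
  rw [h1, hmap, integral_id_gaussianReal' (aux_v_ne_zero hσ)]

private lemma aux_norm_sq_eq (y : Fin d → ℝ) :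
    ‖(MeasurableEquiv.toLp 2 (Fin d → ℝ)) y‖ ^ 2 = ∑ i, y i ^ 2 := by
  rw [PiLp.norm_sq_eq_of_L2]
  simp only [Real.norm_eq_abs, sq_abs]
  rfl

private lemma stdGaussian_integrable_normSq (hσ : 0 < σ) :
    Integrable (fun z : EuclideanSpace ℝ (Fin d) => ‖z‖ ^ 2) (stdGaussian d σ) := by
  unfold _root_.stdGaussian
  rw [MeasureTheory.integrable_map_equiv]
  have : ((fun z : EuclideanSpace ℝ (Fin d) => ‖z‖ ^ 2) ∘
      (MeasurableEquiv.toLp 2 (Fin d → ℝ))) = fun y : Fin d → ℝ => ∑ i, y i ^ 2 :=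
    funext fun y => aux_norm_sq_eq y
  rw [this]
  exact integrable_finset_sum _ (fun i _ => aux_eval_integrable_sq hσ i)

private lemma stdGaussian_integral_normSq (hσ : 0 < σ) :
    ∫ z : EuclideanSpace ℝ (Fin d), ‖z‖ ^ 2 ∂(stdGaussian d σ) = d * σ ^ 2 := by
  unfold _root_.stdGaussian
  rw [MeasureTheory.integral_map_equiv]
  have : ∀ y : Fin d → ℝ, ‖(MeasurableEquiv.toLp 2 (Fin d → ℝ)) y‖ ^ 2
      = ∑ i, y i ^ 2 := aux_norm_sq_eq
  rw [show (fun y : Fin d → ℝ => ‖(MeasurableEquiv.toLp 2 (Fin d → ℝ)) y‖ ^ 2)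
      = fun y : Fin d → ℝ => ∑ i, y i ^ 2 from funext this]
  rw [integral_finset_sum _ (fun i _ => aux_eval_integrable_sq hσ i)]
  simp [aux_eval_integral_sq hσ]

private lemma stdGaussian_integrable_norm (hσ : 0 < σ) :
    Integrable (fun z : EuclideanSpace ℝ (Fin d) => ‖z‖) (stdGaussian d σ) := by
  refine Integrable.mono' ((integrable_const 1).add (stdGaussian_integrable_normSq hσ))
    continuous_norm.aestronglyMeasurable (ae_of_all _ fun z => ?_)
  simp only [Pi.add_apply]
  rw [Real.norm_eq_abs, abs_of_nonneg (norm_nonneg z)]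
  nlinarith [norm_nonneg z, sq_nonneg (‖z‖ - 1)]

private lemma stdGaussian_integrable_id (hσ : 0 < σ) :
    Integrable (fun z : EuclideanSpace ℝ (Fin d) => z) (stdGaussian d σ) := by
  refine Integrable.mono' ((integrable_const 1).add (stdGaussian_integrable_normSq hσ))
    aestronglyMeasurable_id (ae_of_all _ fun z => ?_)
  simp only [Pi.add_apply]
  nlinarith [norm_nonneg z, sq_nonneg (‖z‖ - 1)]

private lemma stdGaussian_integral_id (hσ : 0 < σ) :
    ∫ z : EuclideanSpace ℝ (Fin d), z ∂(stdGaussian d σ) = 0 := by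
  ext i
  have hproj := (EuclideanSpace.proj (𝕜 := ℝ) i).integral_comp_comm
    (stdGaussian_integrable_id (d := d) hσ)
  have h1 : (∫ z : EuclideanSpace ℝ (Fin d), z ∂(stdGaussian d σ)) i
      = ∫ z : EuclideanSpace ℝ (Fin d), z i ∂(stdGaussian d σ) := by
    rw [show (∫ z : EuclideanSpace ℝ (Fin d), z ∂(stdGaussian d σ)) i
        = EuclideanSpace.proj (𝕜 := ℝ) i (∫ z : EuclideanSpace ℝ (Fin d), z ∂(stdGaussian d σ))
        from rfl, ← hproj]
    rfl
  rw [h1]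
  have h2 : ∫ z : EuclideanSpace ℝ (Fin d), z i ∂(stdGaussian d σ)
      = ∫ y : Fin d → ℝ, y i
        ∂(Measure.pi fun _ : Fin d => gaussianReal 0 (Real.toNNReal (σ ^ 2))) := by
    unfold _root_.stdGaussian
    rw [MeasureTheory.integral_map_equiv]
    rfl
  rw [h2, aux_eval_integral_id hσ]
  rfl

end StdGaussianFacts

section MainProof

variable {d : ℕ}

private lemma aux_taylor_bound {ρ : ℝ} {F : EuclideanSpace ℝ (Fin d) → ℝ}
    (hρ : 0 < ρ) (hF : ContDiff ℝ 2 F)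
    (hFhessLip : ∀ x y, ‖fderiv ℝ (fderiv ℝ F) x - fderiv ℝ (fderiv ℝ F) y‖ ≤ ρ * ‖x - y‖)
    (y z : EuclideanSpace ℝ (Fin d)) :
    ‖fderiv ℝ F (y + z) - fderiv ℝ F y - fderiv ℝ (fderiv ℝ F) y z‖ ≤ ρ * ‖z‖ * ‖z‖ := by
  set f' := fderiv ℝ F with hf'
  set f'' := fderiv ℝ (fderiv ℝ F) with hf''
  have hf'd : Differentiable ℝ f' :=
    (hF.fderiv_right (m := 1) (by norm_num)).differentiable one_ne_zero
  set g : EuclideanSpace ℝ (Fin d) → (EuclideanSpace ℝ (Fin d) →L[ℝ] ℝ) :=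
    fun w => f' w - f'' y w with hg
  have hderiv : ∀ w, HasFDerivAt g (f'' w - f'' y) w := fun w =>
    ((hf'd w).hasFDerivAt).sub ((f'' y).hasFDerivAt)
  have hbd : ∀ w ∈ Metric.closedBall y ‖z‖, ‖f'' w - f'' y‖ ≤ ρ * ‖z‖ := by
    intro w hw
    have h1 : ‖w - y‖ ≤ ‖z‖ := by
      rw [← dist_eq_norm]; exact Metric.mem_closedBall.mp hw
    calc ‖f'' w - f'' y‖ ≤ ρ * ‖w - y‖ := hFhessLip w y
    _ ≤ ρ * ‖z‖ := mul_le_mul_of_nonneg_left h1 hρ.le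
  have hy : y ∈ Metric.closedBall y ‖z‖ := Metric.mem_closedBall_self (norm_nonneg z)
  have hyz : y + z ∈ Metric.closedBall y ‖z‖ := by
    rw [Metric.mem_closedBall, dist_eq_norm, add_sub_cancel_left]
  have hmvt := Convex.norm_image_sub_le_of_norm_hasFDerivWithin_le
    (fun w _ => (hderiv w).hasFDerivWithinAt) hbd
    (convex_closedBall y ‖z‖) hy hyz
  have heq : g (y + z) - g y = f' (y + z) - f' y - f'' y z := by
    simp only [hg]
    rw [show (f'' y) (y + z) = (f'' y) y + (f'' y) z from map_add _ y z]
    abel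
  have heq2 : (y + z) - y = z := by abel
  rw [heq, heq2] at hmvt
  exact hmvt

private lemma aux_fderiv_growth {ρ : ℝ} {F : EuclideanSpace ℝ (Fin d) → ℝ}
    (hρ : 0 < ρ) (hF : ContDiff ℝ 2 F)
    (hFhessLip : ∀ x y, ‖fderiv ℝ (fderiv ℝ F) x - fderiv ℝ (fderiv ℝ F) y‖ ≤ ρ * ‖x - y‖)
    (w : EuclideanSpace ℝ (Fin d)) :
    ‖fderiv ℝ F w‖ ≤ ‖fderiv ℝ F 0‖ +
      (‖fderiv ℝ (fderiv ℝ F) 0‖ + ρ * ‖w‖) * ‖w‖ := by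
  have h := aux_taylor_bound hρ hF hFhessLip 0 w
  simp only [zero_add] at h
  have h2 : ‖fderiv ℝ F w‖ - ‖fderiv ℝ F 0‖ - ‖fderiv ℝ (fderiv ℝ F) 0 w‖
      ≤ ‖fderiv ℝ F w - fderiv ℝ F 0 - fderiv ℝ (fderiv ℝ F) 0 w‖ := by
    have := norm_sub_norm_le (fderiv ℝ F w - fderiv ℝ F 0) (fderiv ℝ (fderiv ℝ F) 0 w)
    have := norm_sub_norm_le (fderiv ℝ F w) (fderiv ℝ F 0)
    linarith [norm_sub_norm_le (fderiv ℝ F w - fderiv ℝ F 0)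
      (fderiv ℝ (fderiv ℝ F) 0 w), norm_sub_norm_le (fderiv ℝ F w) (fderiv ℝ F 0)]
  have h3 : ‖fderiv ℝ (fderiv ℝ F) 0 w‖ ≤ ‖fderiv ℝ (fderiv ℝ F) 0‖ * ‖w‖ :=
    (fderiv ℝ (fderiv ℝ F) 0).le_opNorm w
  nlinarith [norm_nonneg w]

end MainProof

set_option maxHeartbeats 1000000 in
/-- if `F` is bounded, C² and `ρ`-Hessian Lipschitz, then
`‖∇F̃_σ(x) - ∇F(x)‖ ≤ ρ d σ²`. -/
theorem gaussian_smoothing_gradient_bias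
    (d : ℕ) (hd : 1 ≤ d) (σ ρ : ℝ) (hσ : 0 < σ) (hρ : 0 < ρ)
    (F : EuclideanSpace ℝ (Fin d) → ℝ) (hF_bd : ∃ B, ∀ x, |F x| ≤ B)
    (hF : ContDiff ℝ 2 F)
    (hFhessLip : ∀ x y, ‖fderiv ℝ (fderiv ℝ F) x - fderiv ℝ (fderiv ℝ F) y‖ ≤ ρ * ‖x - y‖) :
    ∀ x : EuclideanSpace ℝ (Fin d),
      ‖gradient (gaussSmooth σ F) x - gradient F x‖ ≤ ρ * d * σ ^ 2 := by
  intro x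
  set μ := stdGaussian d σ with hμdef
  haveI : IsProbabilityMeasure μ := aux_stdGaussian_isProbability d σ
  set f' := fderiv ℝ F with hf'def
  set f'' := fderiv ℝ (fderiv ℝ F) with hf''def
  have hFd : Differentiable ℝ F := hF.differentiable (by norm_num)
  have hf'c1 : ContDiff ℝ 1 f' := hF.fderiv_right (m := 1) (by norm_num)
  have hf'cont : Continuous f' := hf'c1.continuous
  -- domination
  set R : ℝ := ‖x‖ + 1 with hR
  set c0 : ℝ := ‖f' 0‖ + (‖f'' 0‖ + ρ * R) * R with hc0
  set c1 : ℝ := ‖f'' 0‖ + 2 * ρ * R with hc1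
  set bound : EuclideanSpace ℝ (Fin d) → ℝ := fun a => c0 + c1 * ‖a‖ + ρ * ‖a‖ ^ 2 with hbound
  have hbound_int : Integrable bound μ := by
    apply Integrable.add
    · apply Integrable.add (integrable_const c0)
      exact (stdGaussian_integrable_norm hσ).const_mul c1
    · exact (stdGaussian_integrable_normSq hσ).const_mul ρ
  have hRpos : 0 < R := by positivity
  have hbval : ∀ (a : EuclideanSpace ℝ (Fin d)), ∀ x' ∈ Metric.ball x 1,
      ‖f' (x' + a)‖ ≤ bound a := by
    intro a x' hx'
    have hgrow := aux_fderiv_growth hρ hF hFhessLip (x' + a)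
    have hx'n : ‖x'‖ ≤ ‖x‖ + 1 := by
      linarith [norm_sub_norm_le x' x, (mem_ball_iff_norm.mp hx').le]
    have hs : ‖x' + a‖ ≤ R + ‖a‖ := by
      calc ‖x' + a‖ ≤ ‖x'‖ + ‖a‖ := norm_add_le _ _
      _ ≤ R + ‖a‖ := by rw [hR]; linarith
    have h0 : (0:ℝ) ≤ ‖x' + a‖ := norm_nonneg _
    have h1 : (0:ℝ) ≤ ‖a‖ := norm_nonneg _
    have h2 : (0:ℝ) ≤ ‖f'' 0‖ := ContinuousLinearMap.opNorm_nonneg _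
    have hmono : (‖f'' 0‖ + ρ * ‖x' + a‖) * ‖x' + a‖
        ≤ (‖f'' 0‖ + ρ * (R + ‖a‖)) * (R + ‖a‖) := by
      apply mul_le_mul _ hs h0
      · positivity
      · exact add_le_add_right (mul_le_mul_of_nonneg_left hs hρ.le) _
    have hexp : bound a = ‖f' 0‖ + (‖f'' 0‖ + ρ * (R + ‖a‖)) * (R + ‖a‖) := by
      rw [hbound]; simp only [hc0, hc1]; ring
    rw [hexp]
    linarith [hgrow, hmono]
  -- differentiation under the integral sign
  obtain ⟨B, hB⟩ := hF_bd
  have hasderiv : HasFDerivAt (gaussSmooth σ F) (∫ a, f' (x + a) ∂μ) x := by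
    have h := hasFDerivAt_integral_of_dominated_of_fderiv_le
      (F := fun x' (a : EuclideanSpace ℝ (Fin d)) => F (x' + a))
      (F' := fun x' (a : EuclideanSpace ℝ (Fin d)) => f' (x' + a))
      (μ := μ) (x₀ := x) (bound := bound) (s := Metric.ball x 1) (Metric.ball_mem_nhds x one_pos)
      (Filter.Eventually.of_forall fun x' =>
        (hF.continuous.comp (continuous_const.add continuous_id)).aestronglyMeasurable)
      (by
        refine Integrable.mono' (integrable_const B)
          ((hF.continuous.comp (continuous_const.add continuous_id)).aestronglyMeasurable)
          (ae_of_all _ fun a => ?_)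
        exact (Real.norm_eq_abs _) ▸ hB (x + a))
      ((hf'cont.comp (continuous_const.add continuous_id)).aestronglyMeasurable)
      (ae_of_all _ fun a x' hx' => hbval a x' hx')
      hbound_int
      (ae_of_all _ fun a x' _ => by
        have h1 : HasFDerivAt (fun w : EuclideanSpace ℝ (Fin d) => w + a)
            (ContinuousLinearMap.id ℝ (EuclideanSpace ℝ (Fin d))) x' :=
          (hasFDerivAt_id x').add_const a
        have h2 := ((hFd (x' + a)).hasFDerivAt).comp x' h1
        have h3 : HasFDerivAt (F ∘ fun w => w + a) (fderiv ℝ F (x' + a)) x' := by simpa using h2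
        exact h3)
    exact h
  have hfds : fderiv ℝ (gaussSmooth σ F) x = ∫ a, f' (x + a) ∂μ := hasderiv.fderiv
  -- pass from gradients to Fréchet derivatives
  have hgradnorm : ‖gradient (gaussSmooth σ F) x - gradient F x‖
      = ‖fderiv ℝ (gaussSmooth σ F) x - f' x‖ := by
    unfold gradient
    rw [← LinearIsometryEquiv.map_sub, LinearIsometryEquiv.norm_map]
  rw [hgradnorm, hfds]
  -- integrability facts
  have hint1 : Integrable (fun a => f' (x + a)) μ :=
    Integrable.mono' hbound_int
      ((hf'cont.comp (continuous_const.add continuous_id)).aestronglyMeasurable)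
      (ae_of_all _ fun a => hbval a x (Metric.mem_ball_self one_pos))
  have hint_id : Integrable (fun a : EuclideanSpace ℝ (Fin d) => a) μ := stdGaussian_integrable_id hσ
  have hint2 : Integrable (fun a : EuclideanSpace ℝ (Fin d) => f'' x a) μ := (f'' x).integrable_comp hint_id
  have hmean : ∫ a : EuclideanSpace ℝ (Fin d), f'' x a ∂μ = 0 := by
    rw [(f'' x).integral_comp_comm hint_id, stdGaussian_integral_id hσ, map_zero]
  have hintsub : Integrable (fun a => f' (x + a) - f' x) μ :=
    hint1.sub (integrable_const (f' x))
  have heq : ∫ a, (f' (x + a) - f' x - f'' x a) ∂μ = (∫ a, f' (x + a) ∂μ) - f' x := by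
    rw [integral_sub hintsub hint2,
      integral_sub hint1 (integrable_const (f' x)), integral_const, hmean, sub_zero]
    simp
  rw [← heq]
  -- final bound
  have hb2 : ∀ a : EuclideanSpace ℝ (Fin d), ‖f' (x + a) - f' x - f'' x a‖ ≤ ρ * ‖a‖ ^ 2 := by
    intro a
    have := aux_taylor_bound hρ hF hFhessLip x a
    calc ‖f' (x + a) - f' x - f'' x a‖ ≤ ρ * ‖a‖ * ‖a‖ := this
    _ = ρ * ‖a‖ ^ 2 := by ring
  calc ‖∫ a, (f' (x + a) - f' x - f'' x a) ∂μ‖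
      ≤ ∫ a, ρ * ‖a‖ ^ 2 ∂μ := norm_integral_le_of_norm_le
        ((stdGaussian_integrable_normSq hσ).const_mul ρ) (ae_of_all _ hb2)
    _ = ρ * ∫ a : EuclideanSpace ℝ (Fin d), ‖a‖ ^ 2 ∂μ := MeasureTheory.integral_const_mul ρ _
    _ = ρ * (d * σ ^ 2) := by rw [stdGaussian_integral_normSq hσ]
    _ = ρ * d * σ ^ 2 := by ring
end

section
/- Let f : ℝ^d → ℝ be differentiable and ℓ-gradient Lipschitz with ℓ > 0, let 0 < η ≤ 1/ℓ, let x, ζ ∈ ℝ^d, and set x⁺ = x − η(∇f(x) + ζ). Then f(x⁺) − f(x) ≤ −(η/4)·‖∇f(x)‖² + 5η·‖ζ‖². -/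
open scoped RealInnerProductSpace

/-- Descent lemma. -/
lemma descent_lemma {d : ℕ} (ℓ : ℝ) (hℓ : 0 < ℓ)
    (f : EuclideanSpace ℝ (Fin d) → ℝ) (hf : Differentiable ℝ f)
    (hlip : ∀ x y, ‖gradient f x - gradient f y‖ ≤ ℓ * ‖x - y‖)
    (x v : EuclideanSpace ℝ (Fin d)) :
    f (x + v) - f x ≤ ⟪gradient f x, v⟫ + ℓ / 2 * ‖v‖ ^ 2 := by
  have hgrad : ∀ y, HasGradientAt f (gradient f y) y := fun y =>
    (hf y).hasGradientAt
  -- derivative of t ↦ f (x + t • v)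
  have hderiv : ∀ t : ℝ, HasDerivAt (fun t : ℝ => f (x + t • v))
      ⟪gradient f (x + t • v), v⟫ t := by
    intro t
    have h1 : HasDerivAt (fun t : ℝ => x + t • v) v t := by
      simpa using ((hasDerivAt_id t).smul_const v).const_add x
    have h2 := ((hgrad (x + t • v)).hasFDerivAt).comp_hasDerivAt t h1
    simpa [InnerProductSpace.toDual_apply_apply, real_inner_comm, Function.comp_def] using h2
  have hcontgrad : Continuous (gradient f) :=
    (LipschitzWith.of_dist_le_mul (K := ⟨ℓ, hℓ.le⟩)
      (fun a b => by rw [dist_eq_norm, dist_eq_norm]; exact hlip a b)).continuous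
  have hcont : Continuous fun t : ℝ => ⟪gradient f (x + t • v), v⟫ := by
    exact (Continuous.inner (hcontgrad.comp (by continuity)) continuous_const)
  have hint : ∀ s : Set ℝ, IntervalIntegrable
      (fun t : ℝ => ⟪gradient f (x + t • v), v⟫) MeasureTheory.volume 0 1 :=
    fun _ => hcont.intervalIntegrable 0 1
  have key : f (x + v) - f x
      = ∫ t in (0:ℝ)..1, ⟪gradient f (x + t • v), v⟫ := by
    have := intervalIntegral.integral_eq_sub_of_hasDerivAt
      (f := fun t : ℝ => f (x + t • v)) (a := 0) (b := 1)
      (fun t _ => hderiv t) (hint Set.univ)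
    simpa using this.symm
  rw [key]
  have bound : ∀ t ∈ Set.Icc (0:ℝ) 1,
      ⟪gradient f (x + t • v), v⟫ ≤ ⟪gradient f x, v⟫ + ℓ * t * ‖v‖ ^ 2 := by
    intro t ht
    have h1 : ⟪gradient f (x + t • v) - gradient f x, v⟫
        ≤ ‖gradient f (x + t • v) - gradient f x‖ * ‖v‖ :=
      real_inner_le_norm _ _
    have h2 : ‖gradient f (x + t • v) - gradient f x‖ ≤ ℓ * (t * ‖v‖) := by
      have := hlip (x + t • v) x
      simpa [norm_smul, abs_of_nonneg ht.1] using this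
    have h3 : ⟪gradient f (x + t • v) - gradient f x, v⟫ ≤ ℓ * t * ‖v‖ ^ 2 := by
      calc ⟪gradient f (x + t • v) - gradient f x, v⟫
          ≤ ‖gradient f (x + t • v) - gradient f x‖ * ‖v‖ := h1
        _ ≤ ℓ * (t * ‖v‖) * ‖v‖ := by
            exact mul_le_mul_of_nonneg_right h2 (norm_nonneg _)
        _ = ℓ * t * ‖v‖ ^ 2 := by ring
    have := inner_sub_left (𝕜 := ℝ) (gradient f (x + t • v)) (gradient f x) v
    linarith [h3, this ▸ h3]
  calc (∫ t in (0:ℝ)..1, ⟪gradient f (x + t • v), v⟫)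
      ≤ ∫ t in (0:ℝ)..1, (⟪gradient f x, v⟫ + ℓ * t * ‖v‖ ^ 2) := by
        apply intervalIntegral.integral_mono_on (by norm_num) (hint Set.univ)
        · exact (continuous_const.add ((continuous_const.mul continuous_id).mul
            continuous_const)).intervalIntegrable 0 1
        · exact bound
    _ = ⟪gradient f x, v⟫ + ℓ / 2 * ‖v‖ ^ 2 := by
        have he : ∀ t : ℝ, ⟪gradient f x, v⟫ + ℓ * t * ‖v‖ ^ 2
            = ⟪gradient f x, v⟫ + (ℓ * ‖v‖ ^ 2) * t := fun t => by ring
        simp_rw [he]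
        rw [intervalIntegral.integral_add (continuous_const.intervalIntegrable 0 1)
          ((by continuity : Continuous fun t : ℝ => ℓ * ‖v‖ ^ 2 * t).intervalIntegrable 0 1),
          intervalIntegral.integral_const_mul, integral_id]
        simp
        ring

/-- one step of (noisy) gradient descent with step size `η ≤ 1/ℓ` on an
`ℓ`-gradient Lipschitz function decreases the value:
`f(x - η(∇f(x) + ζ)) - f(x) ≤ -(η/4)‖∇f(x)‖² + 5η‖ζ‖²`. -/
theorem noisy_gradient_descent_step
    {d : ℕ} (ℓ η : ℝ) (hℓ : 0 < ℓ)
    (f : EuclideanSpace ℝ (Fin d) → ℝ) (hf : Differentiable ℝ f)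
    (hlip : ∀ x y, ‖gradient f x - gradient f y‖ ≤ ℓ * ‖x - y‖)
    (hη : 0 < η) (hη' : η ≤ 1 / ℓ)
    (x ζ : EuclideanSpace ℝ (Fin d)) :
    f (x - η • (gradient f x + ζ)) - f x
      ≤ -(η / 4) * ‖gradient f x‖ ^ 2 + 5 * η * ‖ζ‖ ^ 2 := by
  set g := gradient f x with hg
  have key := descent_lemma ℓ hℓ f hf hlip x (-(η • (g + ζ)))
  have hrw : x + -(η • (g + ζ)) = x - η • (g + ζ) := by abel
  rw [hrw] at key
  have hinner : ⟪g, -(η • (g + ζ))⟫ = -η * (‖g‖ ^ 2 + ⟪g, ζ⟫) := by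
    rw [inner_neg_right, inner_smul_right, inner_add_right, real_inner_self_eq_norm_sq]
    ring
  have hnorm : ‖-(η • (g + ζ))‖ ^ 2 = η ^ 2 * ‖g + ζ‖ ^ 2 := by
    rw [norm_neg, norm_smul]
    simp [abs_of_nonneg hη.le, mul_pow]
  have hexp : ‖g + ζ‖ ^ 2 = ‖g‖ ^ 2 + 2 * ⟪g, ζ⟫ + ‖ζ‖ ^ 2 := by
    rw [← real_inner_self_eq_norm_sq, real_inner_add_add_self, real_inner_self_eq_norm_sq,
      real_inner_self_eq_norm_sq]
  have hηℓ : η * ℓ ≤ 1 := by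
    rw [← le_div_iff₀ hℓ]; exact hη'
  have hsq : ℓ / 2 * (η ^ 2 * ‖g + ζ‖ ^ 2) ≤ η / 2 * ‖g + ζ‖ ^ 2 := by
    have hnn : 0 ≤ ‖g + ζ‖ ^ 2 := sq_nonneg _
    nlinarith [hη.le]
  rw [hinner, hnorm] at key
  have : f (x - η • (g + ζ)) - f x ≤ -η * (‖g‖ ^ 2 + ⟪g, ζ⟫) + η / 2 * ‖g + ζ‖ ^ 2 :=
    le_trans key (by linarith)
  rw [hexp] at this
  nlinarith [sq_nonneg ‖ζ‖, hη.le]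
end

section
/- Let d ≥ 2, let w⋆ ∈ ℝ^d with ‖w⋆‖ = 1, and let w ∈ ℝ^d with w ≠ 0 and ⟨w, w⋆⟩ > 0. Set θ = arccos(⟨w, w⋆⟩/‖w‖) ∈ [0, π/2) and define G(w) = (1/2)(w − w⋆) + (1/(2π))·(θ·w⋆ − (w/‖w‖)·sin θ). Then ⟨G(w), w − w⋆⟩ ≥ (1/10)·‖w − w⋆‖². -/
open Real in
private lemma relu_aux_scalar (r c θ s : ℝ) (hc0 : 0 < c) (hc1 : c ≤ 1)
    (hθ0 : 0 ≤ θ) (hθ2 : θ ≤ π / 2) (hs0 : 0 ≤ s) (hs2 : s ^ 2 = 1 - c ^ 2)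
    (hθs : θ ≤ π / 2 * s) :
    (1/10 : ℝ) * (r ^ 2 - 2 * (r * c) + 1)
      ≤ (1/2) * (r ^ 2 - 2 * (r * c) + 1)
        + (1 / (2 * π)) * (θ * (r * c - 1) - s * (r - c)) := by
  have hπ : (3 : ℝ) < π := Real.pi_gt_three
  have hπ0 : (0 : ℝ) < π := by linarith
  have key : (1 / (2 * π)) * (θ * (1 - r * c) + s * (r - c))
      ≤ (2/5) * (r ^ 2 - 2 * (r * c) + 1) := by
    have h2 : r ^ 2 - 2 * (r * c) + 1 = (r - c) ^ 2 + s ^ 2 := by rw [hs2]; ring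
    rw [h2, div_mul_eq_mul_div, div_le_iff₀ (by linarith : (0:ℝ) < 2 * π)]
    obtain ⟨a, ha⟩ : ∃ a : ℝ, r - c = a := ⟨_, rfl⟩
    rw [ha]
    obtain ⟨b, hb⟩ : ∃ b : ℝ, |a| = b := ⟨_, rfl⟩
    have hba : b ^ 2 = a ^ 2 := by rw [← hb]; exact sq_abs a
    have h3 : θ * (1 - r * c) + s * a = θ * (s ^ 2 - c * a) + s * a := by
      rw [hs2, ← ha]; ring
    rw [h3]
    have hθc2 : θ * c ≤ 2 * s := by
      have e1 : θ * c ≤ θ := mul_le_of_le_one_right hθ0 hc1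
      have e2 : π / 2 * s ≤ 2 * s :=
        mul_le_mul_of_nonneg_right (by linarith [Real.pi_lt_d2] : π / 2 ≤ 2) hs0
      linarith
    have hθc0 : 0 ≤ θ * c := mul_nonneg hθ0 hc0.le
    have habs1 : |s - θ * c| ≤ s := by rw [abs_le]; constructor <;> linarith
    have habs : a * (s - θ * c) ≤ b * s :=
      (le_abs_self _).trans (by
        rw [abs_mul, hb]
        exact mul_le_mul_of_nonneg_left habs1 (hb ▸ abs_nonneg a))
    have g1 : θ * s ^ 2 ≤ π / 2 * s ^ 2 :=
      mul_le_mul_of_nonneg_right hθ2 (sq_nonneg s)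
    have g2 : b * s ≤ 1/2 * b ^ 2 + 1/2 * s ^ 2 := by nlinarith [sq_nonneg (b - s)]
    have g3 : 3 * s ^ 2 ≤ π * s ^ 2 := mul_le_mul_of_nonneg_right hπ.le (sq_nonneg s)
    have g4 : 3 * b ^ 2 ≤ π * b ^ 2 := mul_le_mul_of_nonneg_right hπ.le (sq_nonneg b)
    have g5 : (0:ℝ) ≤ π * s ^ 2 := by nlinarith [sq_nonneg s]
    have g6 : (0:ℝ) ≤ π * b ^ 2 := by nlinarith [sq_nonneg b]
    have hstep : θ * s ^ 2 + b * s ≤ (2/5) * (a ^ 2 + s ^ 2) * (2 * π) := by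
      rw [← hba]; linarith
    linarith
  linarith

/-- one-point convexity for the ReLU population gradient: with
`θ = arccos(⟨w,w⋆⟩/‖w‖)` and
`G(w) = (1/2)(w - w⋆) + (1/2π)(θ w⋆ - (w/‖w‖) sin θ)`, if `‖w⋆‖ = 1`, `w ≠ 0` and
`⟨w,w⋆⟩ > 0`, then `⟨G(w), w - w⋆⟩ ≥ (1/10)‖w - w⋆‖²`. -/
theorem relu_population_gradient_one_point_convex
    (d : ℕ) (hd : 2 ≤ d) (wstar w : EuclideanSpace ℝ (Fin d))
    (hws : ‖wstar‖ = 1) (hw0 : w ≠ 0) (hpos : 0 < (inner ℝ w wstar : ℝ)) :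
    (1 / 10 : ℝ) * ‖w - wstar‖ ^ 2
      ≤ (inner ℝ
          ((1 / 2 : ℝ) • (w - wstar) +
            (1 / (2 * Real.pi)) •
              (Real.arccos ((inner ℝ w wstar : ℝ) / ‖w‖) • wstar -
                Real.sin (Real.arccos ((inner ℝ w wstar : ℝ) / ‖w‖)) • (‖w‖⁻¹ • w)))
          (w - wstar) : ℝ) := by
  have hrpos : (0:ℝ) < ‖w‖ := norm_pos_iff.mpr hw0
  set r : ℝ := ‖w‖ with hr
  set p : ℝ := (inner ℝ w wstar : ℝ) with hp
  set c : ℝ := p / r with hc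
  set θ : ℝ := Real.arccos c with hθ
  set s : ℝ := Real.sin θ with hs
  have hcs : p ≤ r := by
    have := real_inner_le_norm w wstar
    rw [hws] at this; simpa [← hp, ← hr] using this
  have hc1 : c ≤ 1 := (div_le_one hrpos).mpr hcs
  have hc0 : 0 < c := div_pos hpos hrpos
  have hcosθ : Real.cos θ = c := Real.cos_arccos (by linarith) hc1
  have hθ0 : 0 ≤ θ := Real.arccos_nonneg c
  have hθ2 : θ ≤ Real.pi / 2 := by rw [hθ, Real.arccos_le_pi_div_two]; exact hc0.le
  have hπ0 : (0:ℝ) < Real.pi := Real.pi_pos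
  have hs0 : 0 ≤ s := Real.sin_nonneg_of_nonneg_of_le_pi hθ0 (by linarith)
  have hs2 : s ^ 2 = 1 - c ^ 2 := by
    have := Real.sin_sq_add_cos_sq θ
    rw [hcosθ, ← hs] at this; linarith
  have hθs : θ ≤ Real.pi / 2 * s := by
    have hjordan : 2 / Real.pi * θ ≤ s := Real.mul_le_sin hθ0 hθ2
    have h := mul_le_mul_of_nonneg_left hjordan (by positivity : (0:ℝ) ≤ Real.pi / 2)
    have he : Real.pi / 2 * (2 / Real.pi * θ) = θ := by field_simp
    linarith [he ▸ h]
  have hpc : p = r * c := by rw [hc]; field_simp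
  have hww : (inner ℝ w w : ℝ) = r ^ 2 := by rw [real_inner_self_eq_norm_sq]
  have hss : (inner ℝ wstar wstar : ℝ) = 1 := by rw [real_inner_self_eq_norm_sq, hws]; norm_num
  have hsw : (inner ℝ wstar w : ℝ) = p := by rw [real_inner_comm, ← hp]
  have hrc : r⁻¹ * (r ^ 2 - p) = r - c := by
    rw [hpc]; field_simp
  have hΔ : ‖w - wstar‖ ^ 2 = r ^ 2 - 2 * (r * c) + 1 := by
    rw [← real_inner_self_eq_norm_sq]
    simp only [inner_sub_left, inner_sub_right, hww, hss, hsw, ← hp]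
    rw [hpc]; ring
  have hexp : (inner ℝ
          ((1 / 2 : ℝ) • (w - wstar) +
            (1 / (2 * Real.pi)) • (θ • wstar - s • (r⁻¹ • w)))
          (w - wstar) : ℝ)
      = (1/2) * (r ^ 2 - 2 * (r * c) + 1)
        + (1 / (2 * Real.pi)) * (θ * (r * c - 1) - s * (r - c)) := by
    simp only [inner_add_left, inner_sub_left, inner_sub_right, real_inner_smul_left,
      hww, hss, hsw, ← hp]
    rw [← hrc, hpc]; ring
  rw [hΔ, hexp]
  clear_value s θ c p r
  exact relu_aux_scalar r c θ s hc0 hc1 hθ0 hθ2 hs0 hs2 hθs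
end

section
/- Let d ≥ 2, let w⋆ ∈ ℝ^d with ‖w⋆‖ = 1, and define R : ℝ^d \ {0} → ℝ by R(w) = (1/4)‖w‖² + 5/4 − (1/(2π))·‖w‖·(sin θ(w) + (π − θ(w))·cos θ(w)), where θ(w) = arccos(⟨w, w⋆⟩/‖w‖). Then at every w ≠ 0 that is not a scalar multiple of w⋆ (i.e., θ(w) ∈ (0, π)), R is differentiable and ∇R(w) = (1/2)(w − w⋆) + (1/(2π))·(θ(w)·w⋆ − (w/‖w‖)·sin θ(w)). -/
/-- the closed-form ReLU population risk
`R(w) = (1/4)‖w‖² + 5/4 - (1/2π)‖w‖(sin θ(w) + (π - θ(w)) cos θ(w))`, with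
`θ(w) = arccos(⟨w,w⋆⟩/‖w‖)`, is differentiable at every `w` that is not a scalar multiple
of the unit vector `w⋆`, with gradient
`∇R(w) = (1/2)(w - w⋆) + (1/2π)(θ(w) w⋆ - (w/‖w‖) sin θ(w))`. -/
theorem relu_population_risk_gradient
    (d : ℕ) (hd : 2 ≤ d) (wstar : EuclideanSpace ℝ (Fin d)) (hws : ‖wstar‖ = 1)
    (w : EuclideanSpace ℝ (Fin d)) (hw0 : w ≠ 0) (hnc : ∀ c : ℝ, w ≠ c • wstar) :
    HasGradientAt
      (fun v : EuclideanSpace ℝ (Fin d) =>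
        (1 / 4 : ℝ) * ‖v‖ ^ 2 + 5 / 4 -
          (1 / (2 * Real.pi)) * ‖v‖ *
            (Real.sin (Real.arccos ((inner ℝ v wstar : ℝ) / ‖v‖)) +
              (Real.pi - Real.arccos ((inner ℝ v wstar : ℝ) / ‖v‖)) *
                Real.cos (Real.arccos ((inner ℝ v wstar : ℝ) / ‖v‖))))
      ((1 / 2 : ℝ) • (w - wstar) +
        (1 / (2 * Real.pi)) •
          (Real.arccos ((inner ℝ w wstar : ℝ) / ‖w‖) • wstar -
            Real.sin (Real.arccos ((inner ℝ w wstar : ℝ) / ‖w‖)) • (‖w‖⁻¹ • w)))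
      w := by
  have hn : (0:ℝ) < ‖w‖ := norm_pos_iff.mpr hw0
  -- strict Cauchy-Schwarz
  have h1 : (inner ℝ w wstar : ℝ) < ‖w‖ := by
    have h := inner_lt_norm_mul_iff_real (x := w) (y := wstar)
    rw [hws] at h
    simpa using h.mpr (by simpa using hnc ‖w‖)
  have h2 : -‖w‖ < (inner ℝ w wstar : ℝ) := by
    have h := inner_lt_norm_mul_iff_real (x := w) (y := -wstar)
    rw [norm_neg, hws] at h
    have := h.mpr (by
      simp only [one_smul, smul_neg, ne_eq, ← neg_smul]
      exact hnc (-‖w‖))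
    simp only [inner_neg_right, mul_one] at this
    linarith [this]
  have habs : |(inner ℝ w wstar : ℝ)| < ‖w‖ := abs_lt.mpr ⟨h2, h1⟩
  have hs0 : (0:ℝ) < ‖w‖^2 - (inner ℝ w wstar : ℝ)^2 := by
    nlinarith [abs_nonneg (inner ℝ w wstar : ℝ), sq_abs (inner ℝ w wstar : ℝ)]
  have hs : 0 < Real.sqrt (‖w‖^2 - (inner ℝ w wstar : ℝ)^2) := Real.sqrt_pos.mpr hs0
  have hq : (inner ℝ w w : ℝ) = ‖w‖^2 := real_inner_self_eq_norm_sq w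
  have hsqq : Real.sqrt (inner ℝ w w : ℝ) = ‖w‖ := by rw [hq, Real.sqrt_sq hn.le]
  have hkey : Real.sqrt (1 - ((inner ℝ w wstar : ℝ)/‖w‖)^2)
      = Real.sqrt (‖w‖^2 - (inner ℝ w wstar : ℝ)^2) / ‖w‖ := by
    rw [show (1 - ((inner ℝ w wstar : ℝ)/‖w‖)^2) = (‖w‖^2 - (inner ℝ w wstar : ℝ)^2)/‖w‖^2 by
      field_simp, Real.sqrt_div hs0.le, Real.sqrt_sq hn.le]
  have hu_lt : |(inner ℝ w wstar : ℝ) / ‖w‖| < 1 := by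
    rw [abs_div, abs_of_pos hn, div_lt_one hn]; exact habs
  have hu1 : (inner ℝ w wstar : ℝ) / ‖w‖ ≠ 1 := by intro h; rw [h] at hu_lt; simp at hu_lt
  have hum1 : (inner ℝ w wstar : ℝ) / ‖w‖ ≠ -1 := by intro h; rw [h] at hu_lt; simp at hu_lt
  -- derivative building blocks
  have hqd : HasFDerivAt (fun v : EuclideanSpace ℝ (Fin d) => (inner ℝ v v : ℝ))
      ((fderivInnerCLM ℝ (w, w)).comp ((ContinuousLinearMap.id ℝ _).prod (ContinuousLinearMap.id ℝ _))) w :=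
    (hasFDerivAt_id w).inner ℝ (hasFDerivAt_id w)
  have hbd : HasFDerivAt (fun v : EuclideanSpace ℝ (Fin d) => (inner ℝ v wstar : ℝ))
      ((fderivInnerCLM ℝ (w, wstar)).comp ((ContinuousLinearMap.id ℝ _).prod 0)) w :=
    (hasFDerivAt_id w).inner ℝ (hasFDerivAt_const wstar w)
  have hgd := HasDerivAt.comp_hasFDerivAt
      (f := fun v : EuclideanSpace ℝ (Fin d) => (inner ℝ v v : ℝ) - (inner ℝ v wstar : ℝ) * (inner ℝ v wstar : ℝ)) w
      (Real.hasDerivAt_sqrt (x := (inner ℝ w w : ℝ) - (inner ℝ w wstar : ℝ) * (inner ℝ w wstar : ℝ))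
        (by rw [hq]; nlinarith)) (hqd.sub (hbd.mul hbd))
  have hsqd := HasDerivAt.comp_hasFDerivAt
      (f := fun v : EuclideanSpace ℝ (Fin d) => (inner ℝ v v : ℝ)) w
      (Real.hasDerivAt_sqrt (x := (inner ℝ w w : ℝ)) (by rw [hq]; positivity)) hqd
  have hinvd := HasDerivAt.comp_hasFDerivAt
      (f := fun v : EuclideanSpace ℝ (Fin d) => Real.sqrt (inner ℝ v v : ℝ)) w
      (hasDerivAt_inv (x := Real.sqrt (inner ℝ w w : ℝ)) (by rw [hsqq]; exact hn.ne')) hsqd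
  have hud := hbd.mul hinvd
  have hacd := HasDerivAt.comp_hasFDerivAt
      (f := fun v : EuclideanSpace ℝ (Fin d) => (inner ℝ v wstar : ℝ) * (Real.sqrt (inner ℝ v v : ℝ))⁻¹) w
      (Real.hasDerivAt_arccos
        (x := (inner ℝ w wstar : ℝ) * (Real.sqrt (inner ℝ w w : ℝ))⁻¹)
        (by rw [hsqq, ← div_eq_mul_inv]; exact hum1)
        (by rw [hsqq, ← div_eq_mul_inv]; exact hu1)) hud
  have hGd := ((hqd.const_mul (1/4:ℝ)).add_const (5/4:ℝ)).sub
      ((hgd.add ((hacd.const_sub Real.pi).mul hbd)).const_mul (1/(2*Real.pi)))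
  -- the original function agrees with G near w
  have heq : (fun v : EuclideanSpace ℝ (Fin d) =>
        (1 / 4 : ℝ) * ‖v‖ ^ 2 + 5 / 4 -
          (1 / (2 * Real.pi)) * ‖v‖ *
            (Real.sin (Real.arccos ((inner ℝ v wstar : ℝ) / ‖v‖)) +
              (Real.pi - Real.arccos ((inner ℝ v wstar : ℝ) / ‖v‖)) *
                Real.cos (Real.arccos ((inner ℝ v wstar : ℝ) / ‖v‖)))) =ᶠ[nhds w]
      (fun v : EuclideanSpace ℝ (Fin d) => (1/4 : ℝ) * (inner ℝ v v : ℝ) + (5/4:ℝ) -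
        (1/(2*Real.pi)) * (Real.sqrt ((inner ℝ v v : ℝ) - (inner ℝ v wstar : ℝ) * (inner ℝ v wstar : ℝ)) +
          (Real.pi - Real.arccos ((inner ℝ v wstar : ℝ) * (Real.sqrt (inner ℝ v v : ℝ))⁻¹)) * (inner ℝ v wstar : ℝ))) := by
    filter_upwards [compl_singleton_mem_nhds hw0] with v hv
    have hnv : (0:ℝ) < ‖v‖ := norm_pos_iff.mpr hv
    have hqv : (inner ℝ v v : ℝ) = ‖v‖^2 := real_inner_self_eq_norm_sq v
    have hsqv : Real.sqrt (inner ℝ v v : ℝ) = ‖v‖ := by rw [hqv, Real.sqrt_sq hnv.le]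
    have hb : |(inner ℝ v wstar : ℝ)| ≤ ‖v‖ := by
      have := abs_real_inner_le_norm v wstar; rwa [hws, mul_one] at this
    have hble : |(inner ℝ v wstar : ℝ) / ‖v‖| ≤ 1 := by
      rw [abs_div, abs_of_pos hnv, div_le_one hnv]; exact hb
    rw [abs_le] at hble
    have hcos : Real.cos (Real.arccos ((inner ℝ v wstar : ℝ) / ‖v‖)) = (inner ℝ v wstar : ℝ) / ‖v‖ :=
      Real.cos_arccos hble.1 hble.2
    have hsin : Real.sin (Real.arccos ((inner ℝ v wstar : ℝ) / ‖v‖)) =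
        Real.sqrt (1 - ((inner ℝ v wstar : ℝ) / ‖v‖)^2) := Real.sin_arccos _
    have hprod : ‖v‖ * Real.sqrt (1 - ((inner ℝ v wstar : ℝ) / ‖v‖)^2) =
        Real.sqrt ((inner ℝ v v : ℝ) - (inner ℝ v wstar : ℝ) * (inner ℝ v wstar : ℝ)) := by
      rw [← Real.sqrt_sq hnv.le, ← Real.sqrt_mul (sq_nonneg ‖v‖)]
      · congr 1
        rw [Real.sqrt_sq hnv.le, hqv]; field_simp
    rw [hsin, hcos, hsqv, ← div_eq_mul_inv]
    rw [hqv] at hprod ⊢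
    rw [← hprod]
    field_simp
  refine hasGradientAt_iff_hasFDerivAt.mpr ?_
  refine (hGd.congr_of_eventuallyEq heq).congr_fderiv ?_
  ext h
  simp only [InnerProductSpace.toDual_apply_apply, ContinuousLinearMap.add_apply,
    ContinuousLinearMap.sub_apply, ContinuousLinearMap.smul_apply,
    ContinuousLinearMap.coe_comp', Function.comp_apply, ContinuousLinearMap.prod_apply,
    ContinuousLinearMap.coe_id', id_eq, ContinuousLinearMap.zero_apply,
    fderivInnerCLM_apply, ContinuousLinearMap.neg_apply, smul_eq_mul,
    inner_add_left, inner_sub_left, inner_smul_left, real_inner_smul_left,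
    RCLike.inner_apply, conj_trivial, inner_zero_right, zero_add]
  have e1 : (inner ℝ w w : ℝ) - (inner ℝ w wstar : ℝ) * (inner ℝ w wstar : ℝ)
      = ‖w‖^2 - (inner ℝ w wstar : ℝ)^2 := by rw [hq]; ring
  have hS2 : Real.sqrt (‖w‖^2 - (inner ℝ w wstar : ℝ)^2) ^ 2
      = ‖w‖^2 - (inner ℝ w wstar : ℝ)^2 := Real.sq_sqrt hs0.le
  rw [real_inner_comm h w, real_inner_comm h wstar, Real.sin_arccos, hsqq,
    ← div_eq_mul_inv, e1, hkey]
  set A := (inner ℝ w h : ℝ) with hA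
  set B := (inner ℝ wstar h : ℝ) with hB
  set b := (inner ℝ w wstar : ℝ) with hb
  set nn := ‖w‖ with hnn
  set S := Real.sqrt (nn^2 - b^2) with hS
  have hne1 : nn ≠ 0 := hn.ne'
  have hne2 : S ≠ 0 := hs.ne'
  have hsum : (∑ x : Fin d, h x * w x) = A := by
    rw [hA]
    simp [PiLp.inner_apply, RCLike.inner_apply, conj_trivial, mul_comm]
  field_simp
  linear_combination (8 * (inner ℝ h w : ℝ)) * hS2
end

section
/- Define g : ℝ → ℝ by g(t) = t²/100 − t/(10π) + arctan(t)/(10π). Then g''(0.6) < 0; in particular, g is not convex on the interval [0, 1]. -/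
open Real Filter Set Topology

private lemma hasDerivAt_g (t : ℝ) :
    HasDerivAt (fun t : ℝ => t ^ 2 / 100 - t / (10 * Real.pi) + Real.arctan t / (10 * Real.pi))
      (t / 50 - 1 / (10 * Real.pi) + (1 / (1 + t ^ 2)) / (10 * Real.pi)) t := by
  have h1 : HasDerivAt (fun t : ℝ => t ^ 2 / 100) (t / 50) t := by
    have := (hasDerivAt_pow 2 t).div_const 100
    convert this using 1
    · rfl
    · rfl
    ring
  have h2 : HasDerivAt (fun t : ℝ => t / (10 * Real.pi)) (1 / (10 * Real.pi)) t := by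
    have := (hasDerivAt_id t).div_const (10 * Real.pi)
    simpa using this
  have h3 : HasDerivAt (fun t : ℝ => Real.arctan t / (10 * Real.pi))
      ((1 / (1 + t ^ 2)) / (10 * Real.pi)) t :=
    (Real.hasDerivAt_arctan t).div_const _
  exact (h1.sub h2).add h3

private lemma deriv_g : deriv (fun t : ℝ =>
    t ^ 2 / 100 - t / (10 * Real.pi) + Real.arctan t / (10 * Real.pi)) =
    fun t : ℝ => t / 50 - 1 / (10 * Real.pi) + (1 / (1 + t ^ 2)) / (10 * Real.pi) := by
  funext t
  exact (hasDerivAt_g t).deriv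

private lemma hasDerivAt_g1 (x : ℝ) :
    HasDerivAt (fun t : ℝ => t / 50 - 1 / (10 * Real.pi) + (1 / (1 + t ^ 2)) / (10 * Real.pi))
      (1 / 50 + (-(2 * x) / (1 + x ^ 2) ^ 2) / (10 * Real.pi)) x := by
  have hne : (1 : ℝ) + x ^ 2 ≠ 0 := by positivity
  have h1 : HasDerivAt (fun t : ℝ => t / 50 - 1 / (10 * Real.pi)) (1 / 50) x := by
    simpa using ((hasDerivAt_id x).div_const 50).sub_const (1 / (10 * Real.pi))
  have h2 : HasDerivAt (fun t : ℝ => (1 + t ^ 2)) (2 * x) x := by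
    simpa using (hasDerivAt_pow 2 x).const_add 1
  have h3 : HasDerivAt (fun t : ℝ => (1 / (1 + t ^ 2)) / (10 * Real.pi))
      ((-(2 * x) / (1 + x ^ 2) ^ 2) / (10 * Real.pi)) x := by
    have := (h2.inv hne).div_const (10 * Real.pi)
    simpa [one_div] using this
  exact h1.add h3

private lemma second_deriv_neg : deriv (deriv (fun t : ℝ =>
    t ^ 2 / 100 - t / (10 * Real.pi) + Real.arctan t / (10 * Real.pi))) 0.6 < 0 := by
  rw [deriv_g, (hasDerivAt_g1 0.6).deriv]
  have hpi : Real.pi < 3.15 := Real.pi_lt_d2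
  have hpi0 : 0 < Real.pi := Real.pi_pos
  rw [show (0.6 : ℝ) = 3/5 by norm_num]
  rw [div_add_div _ _ (by norm_num) (by positivity), div_neg_iff]
  right
  constructor
  · nlinarith
  · positivity

/-- the function `g(t) = t²/100 - t/(10π) + arctan(t)/(10π)` has
`g''(0.6) < 0`; in particular it is not convex on `[0,1]`. -/
theorem relu_restricted_risk_nonconvex :
    deriv (deriv (fun t : ℝ =>
        t ^ 2 / 100 - t / (10 * Real.pi) + Real.arctan t / (10 * Real.pi))) 0.6 < 0 ∧
    ¬ ConvexOn ℝ (Set.Icc (0 : ℝ) 1) (fun t : ℝ =>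
        t ^ 2 / 100 - t / (10 * Real.pi) + Real.arctan t / (10 * Real.pi)) := by
  refine ⟨second_deriv_neg, fun hconv => ?_⟩
  set g := fun t : ℝ => t ^ 2 / 100 - t / (10 * Real.pi) + Real.arctan t / (10 * Real.pi) with hg
  have hmono : MonotoneOn (deriv g) (Set.Icc (0 : ℝ) 1) :=
    hconv.monotoneOn_deriv fun x _ => (hasDerivAt_g x).differentiableAt
  -- deriv g has derivative d at 0.6
  have hd : HasDerivAt (deriv g)
      (1 / 50 + (-(2 * 0.6) / (1 + (0.6:ℝ) ^ 2) ^ 2) / (10 * Real.pi)) 0.6 := by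
    rw [deriv_g]
    exact hasDerivAt_g1 0.6
  have hslope : Tendsto (slope (deriv g) 0.6) (𝓝[>] (0.6:ℝ))
      (𝓝 (1 / 50 + (-(2 * 0.6) / (1 + (0.6:ℝ) ^ 2) ^ 2) / (10 * Real.pi))) :=
    (hasDerivAt_iff_tendsto_slope.mp hd).mono_left
      (nhdsWithin_mono _ fun y hy => hy.ne')
  have hnonneg : ∀ᶠ y in 𝓝[>] (0.6:ℝ), 0 ≤ slope (deriv g) 0.6 y := by
    filter_upwards [Ioo_mem_nhdsGT_of_mem (by norm_num : (0.6:ℝ) ∈ Set.Ico 0.6 1)]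
      with y hy
    rw [slope_def_field]
    rw [div_eq_mul_inv]
    apply mul_nonneg
    · have := hmono (by norm_num : (0.6:ℝ) ∈ Set.Icc 0 1)
        (⟨by linarith [hy.1], hy.2.le⟩ : y ∈ Set.Icc (0:ℝ) 1) hy.1.le
      linarith
    · have : (0:ℝ) < y - 0.6 := by linarith [hy.1]
      positivity
  have hge : 0 ≤ 1 / 50 + (-(2 * 0.6) / (1 + (0.6:ℝ) ^ 2) ^ 2) / (10 * Real.pi) :=
    ge_of_tendsto hslope hnonneg
  have hlt := second_deriv_neg
  rw [deriv_g, (hasDerivAt_g1 0.6).deriv] at hlt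
  linarith
end
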